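/- The set of monomials {a^i b^j g^l : 0 ≤ i, j, l ≤ p−1} (images in H of the corresponding words in the free algebra) is a basis of H as a k-vector space; in particular H is finite dimensional over k with dim_k H = p³. -/

import Mathlib

noncomputable section

variable (k : Type*) [Field k]

/-- The generator `a` of the free algebra `k⟨a,b,g⟩`. -/
def aF : FreeAlgebra k (Fin 3) := FreeAlgebra.ι k 0

/-- The generator `b` of the free algebra `k⟨a,b,g⟩`. -/
def bF : FreeAlgebra k (Fin 3) := FreeAlgebra.ι k 1

/-- The generator `g` of the free algebra `k⟨a,b,g⟩`. -/
def gF : FreeAlgebra k (Fin 3) := FreeAlgebra.ι k 2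

/-- The defining relations `a^p = 0`, `b^p = 0`, `ba = ab + (1/2)a²`, `g^p = 1`,
`ga = ag`, `gb = bg − ag` of `H`. -/
inductive HRel (p : ℕ) : FreeAlgebra k (Fin 3) → FreeAlgebra k (Fin 3) → Prop
  | apow : HRel p (aF k ^ p) 0
  | bpow : HRel p (bF k ^ p) 0
  | rel : HRel p (bF k * aF k) (aF k * bF k + (2 : k)⁻¹ • aF k ^ 2)
  | gpow : HRel p (gF k ^ p) 1
  | ga : HRel p (gF k * aF k) (aF k * gF k)
  | gb : HRel p (gF k * bF k) (bF k * gF k - aF k * gF k)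

/-- The algebra `H = k⟨a,b,g⟩/(a^p, b^p, ba − ab − (1/2)a², g^p − 1, ga − ag, gb − bg + ag)`,
which is the smash product `A # kG`. -/
abbrev H (p : ℕ) := RingQuot (HRel k p)

/-- The image of `a` in `H`. -/
def aH (p : ℕ) : H k p := RingQuot.mkAlgHom k (HRel k p) (aF k)

/-- The image of `b` in `H`. -/
def bH (p : ℕ) : H k p := RingQuot.mkAlgHom k (HRel k p) (bF k)

/-- The image of `g` in `H`. -/
def gH (p : ℕ) : H k p := RingQuot.mkAlgHom k (HRel k p) (gF k)


namespace HProof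

variable (k : Type*) [Field k] (p : ℕ)

/-- The model vector space. -/
abbrev W := ℕ × ℕ × ZMod p → k

variable [CharP k p]

/-- cast `ZMod p → k` -/
def zc : ZMod p →+* k := ZMod.castHom dvd_rfl k

/-- multiplication by x -/
def Aop : Module.End k (W k p) where
  toFun f := fun x => if x.1 = 0 ∨ p ≤ x.1 then 0 else f (x.1 - 1, x.2.1, x.2.2)
  map_add' f g := by
    funext x
    by_cases h : x.1 = 0 ∨ p ≤ x.1
    · simp only [Pi.add_apply, if_pos h, add_zero]
    · simp only [Pi.add_apply, if_neg h]
  map_smul' c f := by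
    funext x
    by_cases h : x.1 = 0 ∨ p ≤ x.1
    · simp only [Pi.smul_apply, if_pos h, smul_eq_mul, mul_zero, RingHom.id_apply]
    · simp only [Pi.smul_apply, if_neg h, smul_eq_mul, RingHom.id_apply]

def Sop : Module.End k (W k p) where
  toFun f := fun x => if x.1 = 0 ∨ p ≤ x.1 then 0
    else (((x.1 - 1 : ℕ) : k) * 2⁻¹ + zc k p x.2.2) * f (x.1 - 1, x.2.1, x.2.2)
  map_add' f g := by
    funext x
    by_cases h : x.1 = 0 ∨ p ≤ x.1
    · simp only [Pi.add_apply, if_pos h, add_zero]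
    · simp only [Pi.add_apply, if_neg h, mul_add]
  map_smul' c f := by
    funext x
    by_cases h : x.1 = 0 ∨ p ≤ x.1
    · simp only [Pi.smul_apply, if_pos h, smul_eq_mul, mul_zero, RingHom.id_apply]
    · simp only [Pi.smul_apply, if_neg h, smul_eq_mul, RingHom.id_apply]; ring

def Top : Module.End k (W k p) where
  toFun f := fun x => if p - 1 ≤ x.2.1 then 0 else f (x.1, x.2.1 + 1, x.2.2)
  map_add' f g := by
    funext x
    by_cases h : p - 1 ≤ x.2.1
    · simp only [Pi.add_apply, if_pos h, add_zero]
    · simp only [Pi.add_apply, if_neg h]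
  map_smul' c f := by
    funext x
    by_cases h : p - 1 ≤ x.2.1
    · simp only [Pi.smul_apply, if_pos h, smul_eq_mul, mul_zero, RingHom.id_apply]
    · simp only [Pi.smul_apply, if_neg h, smul_eq_mul, RingHom.id_apply]

def Bop : Module.End k (W k p) := Sop k p + Top k p

def Gop : Module.End k (W k p) where
  toFun f := fun x => f (x.1, x.2.1, x.2.2 - 1)
  map_add' f g := by funext x; simp
  map_smul' c f := by funext x; simp

lemma Aop_apply (f : W k p) (x : ℕ × ℕ × ZMod p) :
    Aop k p f x = if x.1 = 0 ∨ p ≤ x.1 then 0 else f (x.1 - 1, x.2.1, x.2.2) := rfl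

lemma Sop_apply (f : W k p) (x : ℕ × ℕ × ZMod p) :
    Sop k p f x = if x.1 = 0 ∨ p ≤ x.1 then 0
      else (((x.1 - 1 : ℕ) : k) * 2⁻¹ + zc k p x.2.2) * f (x.1 - 1, x.2.1, x.2.2) := rfl

lemma Top_apply (f : W k p) (x : ℕ × ℕ × ZMod p) :
    Top k p f x = if p - 1 ≤ x.2.1 then 0 else f (x.1, x.2.1 + 1, x.2.2) := rfl

lemma Bop_apply (f : W k p) (x : ℕ × ℕ × ZMod p) :
    Bop k p f x = (if x.1 = 0 ∨ p ≤ x.1 then 0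
      else (((x.1 - 1 : ℕ) : k) * 2⁻¹ + zc k p x.2.2) * f (x.1 - 1, x.2.1, x.2.2))
      + (if p - 1 ≤ x.2.1 then 0 else f (x.1, x.2.1 + 1, x.2.2)) := rfl

lemma Gop_apply (f : W k p) (x : ℕ × ℕ × ZMod p) :
    Gop k p f x = f (x.1, x.2.1, x.2.2 - 1) := rfl

/-- support lemma for powers of `Aop` -/
lemma Aop_pow_apply (n : ℕ) (f : W k p) (x : ℕ × ℕ × ZMod p) :
    (Aop k p ^ n) f x =
      if n ≤ x.1 ∧ (x.1 < p ∨ n = 0) then f (x.1 - n, x.2.1, x.2.2) else 0 := by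
  induction n generalizing f x with
  | zero => simp
  | succ n ih =>
    rw [pow_succ', Module.End.mul_apply, Aop_apply]
    by_cases h : x.1 = 0 ∨ p ≤ x.1
    · rw [if_pos h, if_neg]; omega
    · rw [if_neg h, ih]
      push_neg at h
      by_cases h2 : n + 1 ≤ x.1
      · rw [if_pos (by omega), if_pos (by omega)]
        congr 2
        omega
      · rw [if_neg (by omega), if_neg (by omega)]

lemma Sop_pow_succ_eq_zero_of (n : ℕ) (f : W k p) (x : ℕ × ℕ × ZMod p)
    (h : x.1 ≤ n ∨ p ≤ x.1) : (Sop k p ^ (n + 1)) f x = 0 := by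
  induction n generalizing f x with
  | zero =>
    rw [pow_one, Sop_apply, if_pos (by omega)]
  | succ n ih =>
    rw [pow_succ', Module.End.mul_apply, Sop_apply]
    by_cases h2 : x.1 = 0 ∨ p ≤ x.1
    · rw [if_pos h2]
    · rw [if_neg h2, ih f _ (by push_neg at h2; omega), mul_zero]

lemma Top_pow_succ_eq_zero_of (n : ℕ) (f : W k p) (x : ℕ × ℕ × ZMod p)
    (h : p ≤ x.2.1 + n + 1) : (Top k p ^ (n + 1)) f x = 0 := by
  induction n generalizing f x with
  | zero =>
    rw [pow_one, Top_apply, if_pos (by omega)]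
  | succ n ih =>
    rw [pow_succ', Module.End.mul_apply, Top_apply]
    by_cases h2 : p - 1 ≤ x.2.1
    · rw [if_pos h2]
    · rw [if_neg h2]; exact ih f _ (by simp; omega)

lemma Gop_pow_apply (n : ℕ) (f : W k p) (x : ℕ × ℕ × ZMod p) :
    (Gop k p ^ n) f x = f (x.1, x.2.1, x.2.2 - n) := by
  induction n generalizing f x with
  | zero => simp
  | succ n ih =>
    rw [pow_succ', Module.End.mul_apply, Gop_apply, ih]
    push_cast
    ring_nf

lemma hp_pos (hp : 0 < p) : True := trivial

-- relations
lemma rel_apow (hp : 0 < p) : Aop k p ^ p = 0 := by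
  ext f x
  rw [Aop_pow_apply]
  by_cases h : p ≤ x.1 ∧ (x.1 < p ∨ p = 0)
  · omega
  · rw [if_neg h]; rfl

lemma rel_gpow : Gop k p ^ p = 1 := by
  ext f x
  rw [Gop_pow_apply]
  simp

lemma rel_ga : Gop k p * Aop k p = Aop k p * Gop k p := by
  ext f x
  rfl

lemma rel_ba :
    Bop k p * Aop k p = Aop k p * Bop k p + (2 : k)⁻¹ • (Aop k p ^ 2) := by
  ext f x
  obtain ⟨i, j, l⟩ := x
  simp only [Module.End.mul_apply, LinearMap.add_apply, LinearMap.smul_apply, pow_two,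
    Bop_apply, Aop_apply, Pi.smul_apply, Pi.add_apply, smul_eq_mul]
  by_cases h2 : 2 ≤ i ∧ i < p
  · have hc : ((i - 1 - 1 : ℕ) : k) = ((i - 1 : ℕ) : k) - 1 := by
      have h3 : (i - 1 : ℕ) = (i - 1 - 1) + 1 := by omega
      rw [h3]; push_cast; ring
    split_ifs <;> first | rfl | (exfalso; omega) | ring1 | (rw [hc]; ring1)
  · split_ifs <;> first | rfl | (exfalso; omega) | ring1

lemma rel_gb :
    Gop k p * Bop k p = Bop k p * Gop k p - Aop k p * Gop k p := by
  ext f x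
  obtain ⟨i, j, l⟩ := x
  simp only [Module.End.mul_apply, LinearMap.sub_apply, Bop_apply, Aop_apply, Gop_apply,
    Pi.sub_apply, Pi.add_apply]
  have hz : zc k p (l - 1) = zc k p l - 1 := by rw [map_sub, map_one]
  rw [hz]
  split_ifs <;> first | rfl | (exfalso; omega) | ring1

lemma STcomm : Commute (Sop k p) (Top k p) := by
  unfold Commute SemiconjBy
  ext f x
  obtain ⟨i, j, l⟩ := x
  simp only [Module.End.mul_apply, Sop_apply, Top_apply]
  split_ifs <;> first | rfl | (exfalso; omega) | ring1

lemma rel_spow (hp : 0 < p) : Sop k p ^ p = 0 := by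
  obtain ⟨n, rfl⟩ : ∃ n, p = n + 1 := ⟨p - 1, by omega⟩
  ext f x
  rw [Sop_pow_succ_eq_zero_of _ _ n f x (by omega)]
  rfl

lemma rel_tpow (hp : 0 < p) : Top k p ^ p = 0 := by
  obtain ⟨n, rfl⟩ : ∃ n, p = n + 1 := ⟨p - 1, by omega⟩
  ext f x
  rw [Top_pow_succ_eq_zero_of _ _ n f x (by omega)]
  rfl

lemma charP_End : CharP (Module.End k (W k p)) p := by
  have hinj : Function.Injective (algebraMap k (Module.End k (W k p))) := by
    intro c d h
    have h2 := congrArg (fun T : Module.End k (W k p) => T (fun _ => (1 : k)) (0, 0, 0)) h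
    simpa [Module.algebraMap_end_apply] using h2
  exact charP_of_injective_algebraMap hinj p

lemma rel_bpow (hp : Fact p.Prime) : Bop k p ^ p = 0 := by
  haveI := charP_End k p
  haveI := hp
  have h : Bop k p = Sop k p + Top k p := rfl
  rw [h, add_pow_char_of_commute p (STcomm k p), rel_spow k p hp.out.pos,
    rel_tpow k p hp.out.pos, add_zero]

section Rep

def v0 : W k p := fun x => if x = (0, p - 1, 0) then 1 else 0

lemma Gop_pow_v0 (l : ℕ) :
    (Gop k p ^ l) (v0 k p) = fun x => if x = (0, p - 1, (l : ZMod p)) then 1 else 0 := by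
  funext x
  rw [Gop_pow_apply]
  simp only [v0, Prod.ext_iff, sub_eq_zero]

/-- support of `B^j G^l v₀` -/
lemma Bsupp (j l : ℕ) : ∀ x : ℕ × ℕ × ZMod p, (Bop k p ^ j) ((Gop k p ^ l) (v0 k p)) x ≠ 0 →
    x.2.2 = (l : ZMod p) ∧ x.1 ≤ j ∧ x.2.1 + j = (p - 1) + x.1 := by
  induction j with
  | zero =>
    intro x hx
    rw [pow_zero, Module.End.one_apply, Gop_pow_v0] at hx
    by_cases h : x = (0, p - 1, (l : ZMod p))
    · subst h; simp
    · simp [h] at hx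
  | succ j ih =>
    intro x hx
    rw [pow_succ', Module.End.mul_apply, Bop_apply] at hx
    by_cases hS : (if x.1 = 0 ∨ p ≤ x.1 then 0
        else (((x.1 - 1 : ℕ) : k) * 2⁻¹ + zc k p x.2.2) *
          (Bop k p ^ j) ((Gop k p ^ l) (v0 k p)) (x.1 - 1, x.2.1, x.2.2)) = 0
    · -- then the T-term is nonzero
      have hT : (Bop k p ^ j) ((Gop k p ^ l) (v0 k p)) (x.1, x.2.1 + 1, x.2.2) ≠ 0 ∧
          ¬ (p - 1 ≤ x.2.1) := by
        by_cases hg : p - 1 ≤ x.2.1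
        · rw [hS, if_pos hg, add_zero] at hx; exact absurd rfl hx
        · rw [hS, if_neg hg, zero_add] at hx; exact ⟨hx, hg⟩
      obtain ⟨h1, h2, h3⟩ := ih _ hT.1
      have := hT.2
      exact ⟨h1, by omega, by simp at h3 ⊢; omega⟩
    · -- the S-term is nonzero
      by_cases hg : x.1 = 0 ∨ p ≤ x.1
      · rw [if_pos hg] at hS; exact absurd rfl hS
      · rw [if_neg hg] at hS
        have h4 : (Bop k p ^ j) ((Gop k p ^ l) (v0 k p)) (x.1 - 1, x.2.1, x.2.2) ≠ 0 :=
          right_ne_zero_of_mul hS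
        obtain ⟨h1, h2, h3⟩ := ih _ h4
        simp only at h1 h2 h3
        push_neg at hg
        exact ⟨h1, by omega, by omega⟩

/-- corner value of `B^j G^l v₀` -/
lemma Bcorner (hp2 : 2 ≤ p) (j l : ℕ) (hj : j ≤ p - 1) :
    (Bop k p ^ j) ((Gop k p ^ l) (v0 k p)) (0, p - 1 - j, (l : ZMod p)) = 1 := by
  induction j with
  | zero =>
    rw [pow_zero, Module.End.one_apply, Gop_pow_v0]
    simp
  | succ j ih =>
    rw [pow_succ', Module.End.mul_apply, Bop_apply]
    have h1 : ((0 : ℕ), p - 1 - (j+1), ((l : ZMod p))).1 = 0 ∨ p ≤ 0 := Or.inl rfl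
    rw [if_pos h1, if_neg (by simp; omega), zero_add]
    have h2 : (p - 1 - (j+1) + 1) = p - 1 - j := by omega
    simp only [h2]
    exact ih (by omega)

def xvec (i j l : ℕ) : W k p := (Aop k p ^ i) ((Bop k p ^ j) ((Gop k p ^ l) (v0 k p)))

def gens : Fin 3 → Module.End k (W k p)
  | 0 => Aop k p
  | 1 => Bop k p
  | 2 => Gop k p

def Fmap : FreeAlgebra k (Fin 3) →ₐ[k] Module.End k (W k p) :=
  FreeAlgebra.lift k (gens k p)

lemma Fmap_a : Fmap k p (aF k) = Aop k p := by
  rw [aF, Fmap, FreeAlgebra.lift_ι_apply]; rfl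

lemma Fmap_b : Fmap k p (bF k) = Bop k p := by
  rw [bF, Fmap, FreeAlgebra.lift_ι_apply]; rfl

lemma Fmap_g : Fmap k p (gF k) = Gop k p := by
  rw [gF, Fmap, FreeAlgebra.lift_ι_apply]; rfl

def rep (hp : Fact p.Prime) : H k p →ₐ[k] Module.End k (W k p) :=
  RingQuot.liftAlgHom k ⟨Fmap k p, by
    intro x y r
    induction r with
    | apow => rw [map_pow, map_zero, Fmap_a, rel_apow k p hp.out.pos]
    | bpow => rw [map_pow, map_zero, Fmap_b, rel_bpow k p hp]
    | rel =>
      rw [map_mul, map_add, map_smul, map_mul, map_pow, Fmap_a, Fmap_b, rel_ba k p]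
    | gpow => rw [map_pow, map_one, Fmap_g, rel_gpow k p]
    | ga => rw [map_mul, map_mul, Fmap_a, Fmap_g, rel_ga k p]
    | gb => rw [map_mul, map_sub, map_mul, map_mul, Fmap_a, Fmap_b, Fmap_g, rel_gb k p]⟩

lemma rep_mono (hp : Fact p.Prime) (i j l : ℕ) :
    rep k p hp (aH k p ^ i * bH k p ^ j * gH k p ^ l) (v0 k p) = xvec k p i j l := by
  have ha : rep k p hp (aH k p) = Aop k p := by
    rw [aH, rep, RingQuot.liftAlgHom_mkAlgHom_apply, Fmap_a]
  have hb : rep k p hp (bH k p) = Bop k p := by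
    rw [bH, rep, RingQuot.liftAlgHom_mkAlgHom_apply, Fmap_b]
  have hg : rep k p hp (gH k p) = Gop k p := by
    rw [gH, rep, RingQuot.liftAlgHom_mkAlgHom_apply, Fmap_g]
  rw [map_mul, map_mul, map_pow, map_pow, map_pow, ha, hb, hg]
  rfl

lemma fin_cast_eq {a b : Fin p} (h : ((a : ℕ) : ZMod p) = ((b : ℕ) : ZMod p)) : a = b := by
  have ha := ZMod.val_cast_of_lt a.isLt
  have hb := ZMod.val_cast_of_lt b.isLt
  apply Fin.ext
  rw [← ha, ← hb, h]

lemma xvec_li (hp : Fact p.Prime) :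
    LinearIndependent k (fun t : Fin p × Fin p × Fin p =>
      xvec k p (t.1 : ℕ) (t.2.1 : ℕ) (t.2.2 : ℕ)) := by
  rw [Fintype.linearIndependent_iff]
  intro c hc
  suffices haux : ∀ N (t : Fin p × Fin p × Fin p), (t.1 : ℕ) = N → c t = 0 by
    intro t; exact haux (t.1 : ℕ) t rfl
  intro N
  induction N using Nat.strong_induction_on with
  | _ N ih =>
    intro t ht
    set pt : ℕ × ℕ × ZMod p := ((t.1 : ℕ), p - 1 - (t.2.1 : ℕ), ((t.2.2 : ℕ) : ZMod p))
      with hpt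
    have hval := congrFun hc pt
    simp only [Finset.sum_apply, Pi.zero_apply, Pi.smul_apply, smul_eq_mul] at hval
    have hone : xvec k p (t.1 : ℕ) (t.2.1 : ℕ) (t.2.2 : ℕ) pt = 1 := by
      rw [xvec, Aop_pow_apply, if_pos ⟨le_refl _, Or.inl t.1.isLt⟩, hpt]
      simp only [Nat.sub_self]
      exact Bcorner k p hp.out.two_le _ _ (by have := t.2.1.isLt; omega)
    have hzero : ∀ s : Fin p × Fin p × Fin p, s ∈ Finset.univ → s ≠ t →
        c s * xvec k p (s.1 : ℕ) (s.2.1 : ℕ) (s.2.2 : ℕ) pt = 0 := by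
      intro s _ hst
      by_cases hlt : (s.1 : ℕ) < N
      · rw [ih _ hlt s rfl, zero_mul]
      · have hx : xvec k p (s.1 : ℕ) (s.2.1 : ℕ) (s.2.2 : ℕ) pt = 0 := by
          rw [xvec, Aop_pow_apply]
          by_cases hcond : (s.1 : ℕ) ≤ pt.1 ∧ (pt.1 < p ∨ (s.1 : ℕ) = 0)
          · -- then s.1 = t.1
            have hi : (s.1 : ℕ) = N := by
              have := hcond.1
              simp only [hpt] at this
              omega
            rw [if_pos hcond]
            by_contra hne
            obtain ⟨h1, h2, h3⟩ := Bsupp k p _ _ _ hne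
            -- h1 : pt.2.2 = cast s.2.2 ; h3 : pt.2.1 + j = p - 1 + (pt.1 - i)
            simp only [hpt] at h1 h3
            have hl : s.2.2 = t.2.2 := (fin_cast_eq p h1).symm
            have hj : s.2.1 = t.2.1 := by
              apply Fin.ext
              have ht2 := t.2.1.isLt
              have hs2 := s.2.1.isLt
              omega
            have hi' : s.1 = t.1 := by apply Fin.ext; rw [hi, ht]
            exact hst (Prod.ext hi' (Prod.ext hj hl))
          · rw [if_neg hcond]
        rw [hx, mul_zero]
    rw [Finset.sum_eq_single_of_mem t (Finset.mem_univ t) hzero, hone, mul_one] at hval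
    exact hval

end Rep

section Span

lemma H_apow (hp : 0 < p) : aH k p ^ p = 0 := by
  have h := RingQuot.mkAlgHom_rel k (HRel.apow : HRel k p _ _)
  rwa [map_pow, map_zero] at h

lemma H_bpow : bH k p ^ p = 0 := by
  have h := RingQuot.mkAlgHom_rel k (HRel.bpow : HRel k p _ _)
  rwa [map_pow, map_zero] at h

lemma H_gpow : gH k p ^ p = 1 := by
  have h := RingQuot.mkAlgHom_rel k (HRel.gpow : HRel k p _ _)
  rwa [map_pow, map_one] at h

lemma H_ga : gH k p * aH k p = aH k p * gH k p := by
  have h := RingQuot.mkAlgHom_rel k (HRel.ga : HRel k p _ _)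
  rwa [map_mul, map_mul] at h

lemma H_gb : gH k p * bH k p = bH k p * gH k p - aH k p * gH k p := by
  have h := RingQuot.mkAlgHom_rel k (HRel.gb : HRel k p _ _)
  rwa [map_mul, map_sub, map_mul, map_mul] at h

lemma H_ba : bH k p * aH k p = aH k p * bH k p + (2 : k)⁻¹ • aH k p ^ 2 := by
  have h := RingQuot.mkAlgHom_rel k (HRel.rel : HRel k p _ _)
  rwa [map_mul, map_add, map_smul, map_mul, map_pow] at h

lemma H_ga_pow (i : ℕ) : gH k p * aH k p ^ i = aH k p ^ i * gH k p := by
  have h : Commute (gH k p) (aH k p) := H_ga k p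
  exact (h.pow_right i).eq

lemma H_ba_pow (i : ℕ) :
    bH k p * aH k p ^ i = aH k p ^ i * bH k p + ((i : k) * 2⁻¹) • aH k p ^ (i + 1) := by
  induction i with
  | zero => simp
  | succ i ih =>
    calc bH k p * aH k p ^ (i + 1) = (bH k p * aH k p ^ i) * aH k p := by
          rw [pow_succ, mul_assoc]
      _ = (aH k p ^ i * bH k p + ((i : k) * 2⁻¹) • aH k p ^ (i + 1)) * aH k p := by rw [ih]
      _ = aH k p ^ i * (bH k p * aH k p) + ((i : k) * 2⁻¹) • aH k p ^ (i + 2) := by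
          rw [add_mul, smul_mul_assoc, mul_assoc, ← pow_succ]
      _ = aH k p ^ i * (aH k p * bH k p + (2 : k)⁻¹ • aH k p ^ 2)
            + ((i : k) * 2⁻¹) • aH k p ^ (i + 2) := by rw [H_ba]
      _ = aH k p ^ (i + 1) * bH k p + ((2 : k)⁻¹ + (i : k) * 2⁻¹) • aH k p ^ (i + 2) := by
          rw [mul_add, ← mul_assoc, ← pow_succ, mul_smul_comm, ← pow_add, add_assoc, ← add_smul]
      _ = aH k p ^ (i + 1) * bH k p + (((i + 1 : ℕ) : k) * 2⁻¹) • aH k p ^ (i + 1 + 1) := by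
          congr 1
          congr 1
          push_cast
          ring

/-- the family of monomials -/
def fam : Fin p × Fin p × Fin p → H k p := fun t =>
  aH k p ^ (t.1 : ℕ) * bH k p ^ (t.2.1 : ℕ) * gH k p ^ (t.2.2 : ℕ)

/-- the span of the monomials -/
def SS : Submodule k (H k p) := Submodule.span k (Set.range (fam k p))

lemma memS (i j l : ℕ) (hi : i < p) (hj : j < p) (hl : l < p) :
    aH k p ^ i * bH k p ^ j * gH k p ^ l ∈ SS k p :=
  Submodule.subset_span ⟨(⟨i, hi⟩, ⟨j, hj⟩, ⟨l, hl⟩), rfl⟩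

lemma clA (i j l : ℕ) (hi : i < p) (hj : j < p) (hl : l < p) :
    aH k p * (aH k p ^ i * bH k p ^ j * gH k p ^ l) ∈ SS k p := by
  rw [← mul_assoc, ← mul_assoc, ← pow_succ']
  by_cases h : i + 1 < p
  · exact memS k p _ _ _ h hj hl
  · rw [show i + 1 = p by omega, H_apow k p (by omega), zero_mul, zero_mul]
    exact zero_mem _

lemma clB (i j l : ℕ) (hi : i < p) (hj : j < p) (hl : l < p) :
    bH k p * (aH k p ^ i * bH k p ^ j * gH k p ^ l) ∈ SS k p := by
  have key : bH k p * (aH k p ^ i * bH k p ^ j * gH k p ^ l)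
      = aH k p ^ i * bH k p ^ (j + 1) * gH k p ^ l
        + ((i : k) * 2⁻¹) • (aH k p ^ (i + 1) * bH k p ^ j * gH k p ^ l) := by
    rw [mul_assoc (aH k p ^ i) (bH k p ^ j) (gH k p ^ l),
      ← mul_assoc (bH k p) (aH k p ^ i) (bH k p ^ j * gH k p ^ l), H_ba_pow,
      add_mul, smul_mul_assoc, mul_assoc (aH k p ^ i) (bH k p) (bH k p ^ j * gH k p ^ l),
      ← mul_assoc (bH k p) (bH k p ^ j) (gH k p ^ l), ← pow_succ',
      ← mul_assoc (aH k p ^ i) (bH k p ^ (j+1)) (gH k p ^ l),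
      ← mul_assoc (aH k p ^ (i+1)) (bH k p ^ j) (gH k p ^ l)]
  rw [key]
  apply Submodule.add_mem
  · by_cases h : j + 1 < p
    · exact memS k p _ _ _ hi h hl
    · rw [show j + 1 = p by omega, H_bpow k p, mul_zero, zero_mul]
      exact zero_mem _
  · apply Submodule.smul_mem
    by_cases h : i + 1 < p
    · exact memS k p _ _ _ h hj hl
    · rw [show i + 1 = p by omega, H_apow k p (by omega), zero_mul, zero_mul]
      exact zero_mem _

lemma SA (w : H k p) (hw : w ∈ SS k p) : aH k p * w ∈ SS k p := by
  induction hw using Submodule.span_induction with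
  | mem x h =>
    obtain ⟨t, rfl⟩ := h
    exact clA k p _ _ _ t.1.isLt t.2.1.isLt t.2.2.isLt
  | zero => rw [mul_zero]; exact zero_mem _
  | add x y hx hy ihx ihy => rw [mul_add]; exact Submodule.add_mem _ ihx ihy
  | smul a x hx ihx => rw [mul_smul_comm]; exact Submodule.smul_mem _ _ ihx

lemma SB (w : H k p) (hw : w ∈ SS k p) : bH k p * w ∈ SS k p := by
  induction hw using Submodule.span_induction with
  | mem x h =>
    obtain ⟨t, rfl⟩ := h
    exact clB k p _ _ _ t.1.isLt t.2.1.isLt t.2.2.isLt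
  | zero => rw [mul_zero]; exact zero_mem _
  | add x y hx hy ihx ihy => rw [mul_add]; exact Submodule.add_mem _ ihx ihy
  | smul a x hx ihx => rw [mul_smul_comm]; exact Submodule.smul_mem _ _ ihx

lemma SApow (n : ℕ) (w : H k p) (hw : w ∈ SS k p) : aH k p ^ n * w ∈ SS k p := by
  induction n with
  | zero => rwa [pow_zero, one_mul]
  | succ n ih => rw [pow_succ', mul_assoc]; exact SA k p _ ih

lemma clG (hp : 0 < p) (j : ℕ) (hj : j < p) (l : ℕ) (hl : l < p) :
    gH k p * (bH k p ^ j * gH k p ^ l) ∈ SS k p := by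
  induction j with
  | zero =>
    rw [pow_zero, one_mul, ← pow_succ']
    by_cases h : l + 1 < p
    · have := memS k p 0 0 (l + 1) hp hp h
      simpa using this
    · rw [show l + 1 = p by omega, H_gpow k p]
      have := memS k p 0 0 0 hp hp hp
      simpa using this
  | succ j ih =>
    have hj' : j < p := by omega
    have key : gH k p * (bH k p ^ (j + 1) * gH k p ^ l)
        = bH k p * (gH k p * (bH k p ^ j * gH k p ^ l))
          - aH k p * (gH k p * (bH k p ^ j * gH k p ^ l)) := by
      calc gH k p * (bH k p ^ (j + 1) * gH k p ^ l)
          = (gH k p * bH k p) * (bH k p ^ j * gH k p ^ l) := by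
            rw [pow_succ' (bH k p) j, mul_assoc (bH k p) (bH k p ^ j) (gH k p ^ l),
              ← mul_assoc (gH k p) (bH k p) (bH k p ^ j * gH k p ^ l)]
        _ = (bH k p * gH k p) * (bH k p ^ j * gH k p ^ l)
            - (aH k p * gH k p) * (bH k p ^ j * gH k p ^ l) := by rw [H_gb, sub_mul]
        _ = bH k p * (gH k p * (bH k p ^ j * gH k p ^ l))
            - aH k p * (gH k p * (bH k p ^ j * gH k p ^ l)) := by
            rw [mul_assoc (bH k p) (gH k p) (bH k p ^ j * gH k p ^ l),
              mul_assoc (aH k p) (gH k p) (bH k p ^ j * gH k p ^ l)]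
    rw [key]
    exact Submodule.sub_mem _ (SB k p _ (ih hj')) (SA k p _ (ih hj'))

lemma SG (hp : 0 < p) (w : H k p) (hw : w ∈ SS k p) : gH k p * w ∈ SS k p := by
  induction hw using Submodule.span_induction with
  | mem x h =>
    obtain ⟨t, rfl⟩ := h
    show gH k p * (aH k p ^ (t.1 : ℕ) * bH k p ^ (t.2.1 : ℕ) * gH k p ^ (t.2.2 : ℕ)) ∈ SS k p
    rw [mul_assoc (aH k p ^ (t.1 : ℕ)) (bH k p ^ (t.2.1 : ℕ)) (gH k p ^ (t.2.2 : ℕ)),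
      ← mul_assoc (gH k p) (aH k p ^ (t.1 : ℕ)) _, H_ga_pow,
      mul_assoc (aH k p ^ (t.1 : ℕ)) (gH k p) _]
    exact SApow k p _ _ (clG k p hp _ t.2.1.isLt _ t.2.2.isLt)
  | zero => rw [mul_zero]; exact zero_mem _
  | add x y hx hy ihx ihy => rw [mul_add]; exact Submodule.add_mem _ ihx ihy
  | smul a x hx ihx => rw [mul_smul_comm]; exact Submodule.smul_mem _ _ ihx

lemma one_memS (hp : 0 < p) : (1 : H k p) ∈ SS k p := by
  have := memS k p 0 0 0 hp hp hp
  simpa using this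

lemma span_top (hp : 0 < p) (h : H k p) : h ∈ SS k p := by
  obtain ⟨x, rfl⟩ := RingQuot.mkAlgHom_surjective k (HRel k p) h
  have main : ∀ x : FreeAlgebra k (Fin 3), ∀ w ∈ SS k p,
      (RingQuot.mkAlgHom k (HRel k p)) x * w ∈ SS k p := by
    intro x
    induction x using FreeAlgebra.induction with
    | grade0 r =>
      intro w hw
      rw [AlgHom.commutes, ← Algebra.smul_def]
      exact Submodule.smul_mem _ _ hw
    | grade1 i =>
      intro w hw
      match i with
      | 0 => exact SA k p w hw
      | 1 => exact SB k p w hw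
      | 2 => exact SG k p hp w hw
    | mul a b ha hb =>
      intro w hw
      rw [map_mul, mul_assoc]
      exact ha _ (hb w hw)
    | add a b ha hb =>
      intro w hw
      rw [map_add, add_mul]
      exact Submodule.add_mem _ (ha w hw) (hb w hw)
  have := main x 1 (one_memS k p hp)
  simpa using this

end Span

/-- evaluation of the representation at the cyclic vector -/
def psi (hp : Fact p.Prime) : H k p →ₗ[k] W k p where
  toFun h := rep k p hp h (v0 k p)
  map_add' x y := by simp [map_add]
  map_smul' c x := by simp [map_smul]

lemma fam_li (hp : Fact p.Prime) : LinearIndependent k (fam k p) := by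
  apply LinearIndependent.of_comp (psi k p hp)
  have hcomp : (psi k p hp) ∘ (fam k p) = fun t : Fin p × Fin p × Fin p =>
      xvec k p (t.1 : ℕ) (t.2.1 : ℕ) (t.2.2 : ℕ) := by
    funext t
    exact rep_mono k p hp (t.1 : ℕ) (t.2.1 : ℕ) (t.2.2 : ℕ)
  rw [hcomp]
  exact xvec_li k p hp

end HProof

/-- The monomials `a^i b^j g^l`, `0 ≤ i,j,l ≤ p−1`, form a `k`-vector
space basis of `H`; in particular `H` is finite dimensional with `dim_k H = p³`. -/
theorem monomials_basis_of_H (p : ℕ) [CharP k p] (hp : 2 < p) :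
    (∃ 𝒷 : Module.Basis (Fin p × Fin p × Fin p) k (H k p),
      ∀ ijl : Fin p × Fin p × Fin p,
        𝒷 ijl = aH k p ^ (ijl.1 : ℕ) * bH k p ^ (ijl.2.1 : ℕ) * gH k p ^ (ijl.2.2 : ℕ)) ∧
    Module.Finite k (H k p) ∧ Module.finrank k (H k p) = p ^ 3 := by
  have hprime : p.Prime := by
    rcases CharP.char_is_prime_or_zero k p with h | h
    · exact h
    · omega
  haveI hfact : Fact p.Prime := ⟨hprime⟩
  have hli := HProof.fam_li k p hfact
  have hsp : ⊤ ≤ Submodule.span k (Set.range (HProof.fam k p)) := by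
    intro h _
    exact HProof.span_top k p (by omega) h
  let 𝒷 : Module.Basis (Fin p × Fin p × Fin p) k (H k p) := Module.Basis.mk hli hsp
  refine ⟨⟨𝒷, fun t => Module.Basis.mk_apply hli hsp t⟩, Module.Finite.of_basis 𝒷, ?_⟩
  rw [Module.finrank_eq_card_basis 𝒷]
  simp only [Fintype.card_prod, Fintype.card_fin]
  ring

end
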